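/- Let (ñ_α^β)_{α,β≥1} be natural numbers such that for each α only finitely many β satisfy ñ_α^β ≠ 0, and only finitely many α have some ñ_α^β ≠ 0. For b, v ≥ 1 define n_b^v := Σ over finitely supported families (j_α^β)_{α,β≥1} of natural numbers with Σ_{α,β} α·j_α^β = b and Σ_{α,β} β·j_α^β = v, of Π_{α,β} (−(−1)^β)^{j_α^β} · binom(−(−1)^β·ñ_α^β, j_α^β); and set χ̃_α := Σ_{β≥1} (−1)^β·ñ_α^β ∈ ℤ. Then for every b ≥ 1: Σ_{v≥1} (−1)^v·n_b^v = Σ over finitely supported families (i_α)_{α≥1} of natural numbers with Σ_α α·i_α = b of Π_{α≥1} (−1)^{i_α}·binom(−χ̃_α, i_α). (All sums appearing are finite.) -/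

import Mathlib

open Finset

section Aux

lemma upd_same {ι : Type*} [DecidableEq ι] (g : ι →₀ ℕ) (a : ι) (v : ℕ) :
    g.update a v a = v := by simp

lemma upd_ne {ι : Type*} [DecidableEq ι] (g : ι →₀ ℕ) {x a : ι} (h : x ≠ a) (v : ℕ) :
    g.update a v x = g x := by simp [Finsupp.coe_update, Function.update_of_ne h]

lemma ring_choose_finset_sum {ι : Type*} [DecidableEq ι] (s : Finset ι) (f : ι → ℤ) (n : ℕ) :
    Ring.choose (∑ x ∈ s, f x) n =
      ∑ k ∈ s.finsuppAntidiag n, ∏ x ∈ s, Ring.choose (f x) (k x) := by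
  induction s using Finset.induction generalizing n with
  | empty =>
    rw [Finset.sum_empty, finsuppAntidiag_empty]
    rcases Nat.eq_zero_or_pos n with rfl | hn
    · simp [Ring.choose_zero_right]
    · rw [if_neg hn.ne', Finset.sum_empty, Ring.choose_zero_pos ℤ hn]
  | insert a s ha ih =>
    rw [Finset.sum_insert ha, Ring.add_choose_eq _ (Commute.all _ _)]
    simp_rw [ih, Finset.mul_sum]
    rw [Finset.sum_sigma' (antidiagonal n) (fun m => (s.finsuppAntidiag m.2))
      (fun m k => Ring.choose (f a) m.1 * ∏ x ∈ s, Ring.choose (f x) (k x))]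
    refine Finset.sum_bij' (i := fun q _ => Finsupp.update q.2 a q.1.1)
      (j := fun k _ => ⟨(k a, ∑ x ∈ s, k x), k.erase a⟩) ?_ ?_ ?_ ?_ ?_
    · rintro ⟨⟨m1, m2⟩, g⟩ hq
      simp only [Finset.mem_sigma, HasAntidiagonal.mem_antidiagonal, mem_finsuppAntidiag] at hq ⊢
      obtain ⟨hmn, hgs, hgsup⟩ := hq
      constructor
      · rw [Finset.sum_insert ha, upd_same,
          Finset.sum_congr rfl (fun x hx => upd_ne g (ne_of_mem_of_not_mem hx ha) m1)]
        rw [show ∑ x ∈ s, g x = m2 from hgs]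
        exact hmn
      · refine (Finsupp.support_update_subset _ _).trans ?_
        exact Finset.insert_subset_insert a hgsup
    · rintro k hk
      simp only [mem_finsuppAntidiag] at hk
      obtain ⟨hks, hksup⟩ := hk
      simp only [Finset.mem_sigma, HasAntidiagonal.mem_antidiagonal, mem_finsuppAntidiag]
      refine ⟨?_, ?_, ?_⟩
      · rw [← Finset.sum_insert ha, hks]
      · exact Finset.sum_congr rfl fun x hx =>
          Finsupp.erase_ne (ne_of_mem_of_not_mem hx ha)
      · rw [Finsupp.support_erase]
        intro x hx
        have h2 := hksup (Finset.mem_of_mem_erase hx)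
        rcases Finset.mem_insert.mp h2 with rfl | h
        · exact absurd rfl (Finset.ne_of_mem_erase hx)
        · exact h
    · rintro ⟨⟨m1, m2⟩, g⟩ hq
      simp only [Finset.mem_sigma, HasAntidiagonal.mem_antidiagonal, mem_finsuppAntidiag] at hq
      obtain ⟨hmn, hgs, hgsup⟩ := hq
      have hga : g a = 0 := Finsupp.notMem_support_iff.mp (fun h => ha (hgsup h))
      have h1 : (Finsupp.update g a m1) a = m1 := upd_same g a m1
      have h2 : ∑ x ∈ s, (Finsupp.update g a m1) x = m2 := by
        rw [Finset.sum_congr rfl (fun x hx => upd_ne g (ne_of_mem_of_not_mem hx ha) m1)]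
        exact hgs
      dsimp only
      congr 1
      · rw [h1, h2]
      · ext x
        rcases eq_or_ne x a with rfl | hx
        · rw [Finsupp.erase_same, hga]
        · rw [Finsupp.erase_ne hx, upd_ne g hx m1]
    · rintro k hk
      dsimp only
      ext x
      rcases eq_or_ne x a with rfl | hx
      · rw [upd_same]
      · rw [upd_ne _ hx, Finsupp.erase_ne hx]
    · rintro ⟨⟨m1, m2⟩, g⟩ hq
      simp only [Finset.mem_sigma, HasAntidiagonal.mem_antidiagonal, mem_finsuppAntidiag] at hq
      obtain ⟨hmn, hgs, hgsup⟩ := hq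
      dsimp only
      rw [Finset.prod_insert ha, upd_same]
      congr 1
      exact Finset.prod_congr rfl fun x hx => by
        rw [upd_ne g (ne_of_mem_of_not_mem hx ha) m1]

/-- the common rectangle -/
def PPr (b B : ℕ) : Finset (ℕ × ℕ) := Finset.Icc 1 b ×ˢ Finset.Icc 1 B

noncomputable def Mbig (b B : ℕ) : ℕ × ℕ →₀ ℕ := Finsupp.indicator (PPr b B) fun _ _ => b

noncomputable def KK (b B : ℕ) : Finset (ℕ × ℕ →₀ ℕ) := Finset.Iic (Mbig b B)

noncomputable def TT (N j : ℕ × ℕ →₀ ℕ) : ℤ :=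
  ∏ p ∈ j.support, ((-(-1 : ℤ) ^ p.2) ^ (j p) * Ring.choose (-(-1 : ℤ) ^ p.2 * (N p : ℤ)) (j p))

noncomputable def CC (N j : ℕ × ℕ →₀ ℕ) : ℤ :=
  ∏ p ∈ j.support, Ring.choose (-(-1 : ℤ) ^ p.2 * (N p : ℤ)) (j p)

noncomputable def Phi (b B : ℕ) (j : ℕ × ℕ →₀ ℕ) : ℕ →₀ ℕ :=
  Finsupp.indicator (Finset.Icc 1 b) fun α _ => ∑ β ∈ Finset.Icc 1 B, j (α, β)

noncomputable def Mi (b : ℕ) : ℕ →₀ ℕ := Finsupp.indicator (Finset.Icc 1 b) fun _ _ => b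

noncomputable def Ifin (b : ℕ) : Finset (ℕ →₀ ℕ) :=
  (Finset.Iic (Mi b)).filter fun i => i 0 = 0 ∧ i.sum (fun α k => α * k) = b

lemma Mbig_apply (b B : ℕ) (p : ℕ × ℕ) :
    Mbig b B p = if p ∈ PPr b B then b else 0 := by
  classical
  rw [Mbig, Finsupp.indicator_apply]
  split_ifs <;> rfl

lemma mem_KK (b B : ℕ) (j : ℕ × ℕ →₀ ℕ) :
    j ∈ KK b B ↔ ∀ p : ℕ × ℕ, j p ≠ 0 → p ∈ PPr b B ∧ j p ≤ b := by
  classical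
  rw [KK, Finset.mem_Iic, Finsupp.le_def]
  constructor
  · intro h p hp
    have := h p
    rw [Mbig_apply] at this
    split_ifs at this with hP
    · exact ⟨hP, this⟩
    · omega
  · intro h p
    rw [Mbig_apply]
    by_cases hp : j p = 0
    · simp [hp]
    · rcases h p hp with ⟨h1, h2⟩
      rw [if_pos h1]; exact h2

lemma supp_sub_PPr {b B : ℕ} {j : ℕ × ℕ →₀ ℕ} (hj : j ∈ KK b B) :
    ∀ p : ℕ × ℕ, j p ≠ 0 → p ∈ PPr b B := fun p hp => ((mem_KK b B j).mp hj p hp).1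

lemma mem_PPr {b B : ℕ} {p : ℕ × ℕ} :
    p ∈ PPr b B ↔ (1 ≤ p.1 ∧ p.1 ≤ b) ∧ 1 ≤ p.2 ∧ p.2 ≤ B := by
  rw [PPr, Finset.mem_product, Finset.mem_Icc, Finset.mem_Icc]

lemma Phi_apply_mem {b B : ℕ} (j : ℕ × ℕ →₀ ℕ) {α : ℕ} (h : α ∈ Finset.Icc 1 b) :
    Phi b B j α = ∑ β ∈ Finset.Icc 1 B, j (α, β) := by
  classical
  rw [Phi, Finsupp.indicator_apply, dif_pos h]

lemma Phi_apply_not_mem {b B : ℕ} (j : ℕ × ℕ →₀ ℕ) {α : ℕ} (h : α ∉ Finset.Icc 1 b) :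
    Phi b B j α = 0 := by
  classical
  rw [Phi, Finsupp.indicator_apply, dif_neg h]

lemma Hgen {b B : ℕ} {j : ℕ × ℕ →₀ ℕ} (hj : ∀ p : ℕ × ℕ, j p ≠ 0 → p ∈ PPr b B)
    (g : ℕ × ℕ → ℕ → ℕ) (hg0 : ∀ p, g p 0 = 0) :
    j.sum g = ∑ α ∈ Finset.Icc 1 b, ∑ β ∈ Finset.Icc 1 B, g (α, β) (j (α, β)) := by
  have hsupp : j.support ⊆ PPr b B := fun p hp => hj p (Finsupp.mem_support_iff.mp hp)
  rw [Finsupp.sum_of_support_subset j hsupp g (fun p _ => hg0 p), PPr, Finset.sum_product]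

/-- sum1 as a rectangle sum -/
lemma H1 {b B : ℕ} {j : ℕ × ℕ →₀ ℕ} (hj : ∀ p : ℕ × ℕ, j p ≠ 0 → p ∈ PPr b B) :
    j.sum (fun p k => p.1 * k) = ∑ α ∈ Finset.Icc 1 b, α * (Phi b B j α) := by
  rw [Hgen hj _ (fun p => by simp)]
  exact Finset.sum_congr rfl fun α hα => by rw [Phi_apply_mem j hα, Finset.mul_sum]

lemma H2 {b B : ℕ} {j : ℕ × ℕ →₀ ℕ} (hj : ∀ p : ℕ × ℕ, j p ≠ 0 → p ∈ PPr b B) :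
    j.sum (fun p k => p.2 * k)
      = ∑ α ∈ Finset.Icc 1 b, ∑ β ∈ Finset.Icc 1 B, β * j (α, β) := by
  exact Hgen hj _ (fun p => by simp)

lemma H0 {b B : ℕ} {j : ℕ × ℕ →₀ ℕ} (hj : ∀ p : ℕ × ℕ, j p ≠ 0 → p ∈ PPr b B) :
    j.sum (fun _ k => k) = ∑ α ∈ Finset.Icc 1 b, (Phi b B j α) := by
  rw [Hgen hj _ (fun p => rfl)]
  exact Finset.sum_congr rfl fun α hα => (Phi_apply_mem j hα).symm

end Aux

open scoped Classical

section Main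

variable (N : ℕ × ℕ →₀ ℕ) (b B : ℕ)

noncomputable def KKb : Finset (ℕ × ℕ →₀ ℕ) :=
  (KK b B).filter fun j => j.sum (fun p k => p.1 * k) = b

lemma TT_factor_ne_zero {N j : ℕ × ℕ →₀ ℕ} (h : TT N j ≠ 0) {p : ℕ × ℕ}
    (hp : p ∈ j.support) : N p ≠ 0 := by
  intro hNp
  apply h
  rw [TT]
  refine Finset.prod_eq_zero hp ?_
  rw [hNp]
  push_cast
  rw [mul_zero]
  have : j p ≠ 0 := Finsupp.mem_support_iff.mp hp
  obtain ⟨m, hm⟩ := Nat.exists_eq_succ_of_ne_zero this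
  rw [hm, Ring.choose_zero_succ, mul_zero]

lemma sum2_le {j : ℕ × ℕ →₀ ℕ} (hj : j ∈ KK b B)
    (h1 : j.sum (fun p k => p.1 * k) = b) : j.sum (fun p k => p.2 * k) ≤ B * b := by
  have hP := supp_sub_PPr hj
  rw [H2 hP]
  rw [H1 hP] at h1
  calc ∑ α ∈ Finset.Icc 1 b, ∑ β ∈ Finset.Icc 1 B, β * j (α, β)
      ≤ ∑ α ∈ Finset.Icc 1 b, ∑ β ∈ Finset.Icc 1 B, B * (α * j (α, β)) := by
        refine Finset.sum_le_sum fun α hα => Finset.sum_le_sum fun β hβ => ?_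
        have h1α : 1 ≤ α := (Finset.mem_Icc.mp hα).1
        have hβB : β ≤ B := (Finset.mem_Icc.mp hβ).2
        calc β * j (α, β) ≤ B * j (α, β) := Nat.mul_le_mul_right _ hβB
          _ ≤ B * (α * j (α, β)) := Nat.mul_le_mul_left _ (Nat.le_mul_of_pos_left _ h1α)
    _ = B * ∑ α ∈ Finset.Icc 1 b, α * Phi b B j α := by
        rw [Finset.mul_sum]
        refine Finset.sum_congr rfl fun α hα => ?_
        rw [Phi_apply_mem j hα, Finset.mul_sum, Finset.mul_sum]
        try exact Finset.sum_congr rfl fun β _ => by ring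
    _ = B * b := by rw [h1]

lemma one_le_sum2 (hb : 1 ≤ b) {j : ℕ × ℕ →₀ ℕ} (hj : j ∈ KK b B)
    (h1 : j.sum (fun p k => p.1 * k) = b) : 1 ≤ j.sum (fun p k => p.2 * k) := by
  have hP := supp_sub_PPr hj
  have hne : j.support.Nonempty := by
    by_contra h
    rw [Finset.not_nonempty_iff_eq_empty] at h
    rw [Finsupp.sum, h, Finset.sum_empty] at h1
    omega
  obtain ⟨p, hp⟩ := hne
  have hjp : j p ≠ 0 := Finsupp.mem_support_iff.mp hp
  have hp2 : 1 ≤ p.2 := (mem_PPr.mp (hP p hjp)).2.1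
  calc 1 ≤ p.2 * j p := Nat.one_le_iff_ne_zero.mpr (Nat.mul_ne_zero (by omega) hjp)
    _ ≤ j.sum (fun p k => p.2 * k) :=
        Finset.single_le_sum (f := fun q => q.2 * j q) (fun q _ => Nat.zero_le _) hp

lemma step1 (hB : ∀ p ∈ N.support, p.2 ≤ B) (v : ℕ) :
    (∑ᶠ j : {j : ℕ × ℕ →₀ ℕ // (∀ β, j (0, β) = 0) ∧ (∀ α, j (α, 0) = 0) ∧
        (j : ℕ × ℕ →₀ ℕ).sum (fun p k => p.1 * k) = b ∧
        (j : ℕ × ℕ →₀ ℕ).sum (fun p k => p.2 * k) = v}, TT N ↑j) =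
      ∑ j ∈ (KKb b B).filter (fun j => j.sum (fun p k => p.2 * k) = v), TT N j := by
  rw [finsum_subtype_eq_finsum_cond]
  refine finsum_mem_eq_sum_of_inter_support_eq (TT N) ?_
  ext j
  simp only [Set.mem_inter_iff, Set.mem_setOf_eq, Function.mem_support, Finset.coe_filter,
    KKb, Finset.mem_filter]
  constructor
  · rintro ⟨⟨hj1, hj2, hj3, hj4⟩, hT⟩
    refine ⟨⟨⟨(mem_KK b B j).mpr ?_, hj3⟩, hj4⟩, hT⟩
    rintro ⟨a, β⟩ hp
    have hsup : (a, β) ∈ j.support := Finsupp.mem_support_iff.mpr hp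
    have ha : 1 ≤ a := by
      rcases Nat.eq_zero_or_pos a with rfl | h
      · exact absurd (hj1 β) hp
      · exact h
    have hβ1 : 1 ≤ β := by
      rcases Nat.eq_zero_or_pos β with rfl | h
      · exact absurd (hj2 a) hp
      · exact h
    have hle : a * j (a, β) ≤ b := by
      rw [← hj3]
      exact Finset.single_le_sum (f := fun q => q.1 * j q) (fun q _ => Nat.zero_le _) hsup
    have hjp : 1 ≤ j (a, β) := Nat.one_le_iff_ne_zero.mpr hp
    have hN : N (a, β) ≠ 0 := TT_factor_ne_zero hT hsup
    have hβB : β ≤ B := hB (a, β) (Finsupp.mem_support_iff.mpr hN)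
    refine ⟨mem_PPr.mpr ⟨⟨ha, ?_⟩, hβ1, hβB⟩, ?_⟩
    · calc a ≤ a * j (a, β) := Nat.le_mul_of_pos_right _ hjp
        _ ≤ b := hle
    · calc j (a, β) ≤ a * j (a, β) := Nat.le_mul_of_pos_left _ ha
        _ ≤ b := hle
  · rintro ⟨⟨⟨hK, hj3⟩, hj4⟩, hT⟩
    have hP := supp_sub_PPr hK
    refine ⟨⟨fun β => ?_, fun α => ?_, hj3, hj4⟩, hT⟩
    · by_contra h
      have := (mem_PPr.mp (hP (0, β) h)).1.1
      omega
    · by_contra h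
      have := (mem_PPr.mp (hP (α, 0) h)).2.1
      omega

lemma stepL (hb : 1 ≤ b) (hB : ∀ p ∈ N.support, p.2 ≤ B) :
    (∑ᶠ v ∈ Set.Ici 1, ((-1 : ℤ) ^ v *
      ∑ᶠ j : {j : ℕ × ℕ →₀ ℕ // (∀ β, j (0, β) = 0) ∧ (∀ α, j (α, 0) = 0) ∧
          (j : ℕ × ℕ →₀ ℕ).sum (fun p k => p.1 * k) = b ∧
          (j : ℕ × ℕ →₀ ℕ).sum (fun p k => p.2 * k) = v}, TT N ↑j)) =
    ∑ j ∈ KKb b B, (-1 : ℤ) ^ (j.sum fun p k => p.2 * k) * TT N j := by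
  rw [finsum_mem_congr rfl (fun v (_ : v ∈ Set.Ici 1) => by rw [step1 N b B hB v])]
  rw [finsum_mem_eq_sum_of_inter_support_eq _
    (t := Finset.Icc 1 (B * b)) ?_]
  · rw [← Finset.sum_fiberwise_of_maps_to (g := fun j => j.sum fun p k => p.2 * k)
      (t := Finset.Icc 1 (B * b)) ?_ (fun j => (-1 : ℤ) ^ (j.sum fun p k => p.2 * k) * TT N j)]
    · refine Finset.sum_congr rfl fun v _ => ?_
      rw [Finset.mul_sum]
      refine Finset.sum_congr rfl fun j hj => ?_
      rw [(Finset.mem_filter.mp hj).2]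
    · intro j hj
      obtain ⟨hK, h1⟩ := Finset.mem_filter.mp hj
      rw [Finset.mem_Icc]
      exact ⟨one_le_sum2 b B hb hK h1, sum2_le b B hK h1⟩
  · ext v
    simp only [Set.mem_inter_iff, Set.mem_Ici, Function.mem_support, Finset.coe_Icc,
      Set.mem_Icc]
    constructor
    · rintro ⟨hv, hne⟩
      refine ⟨⟨hv, ?_⟩, hne⟩
      have hne2 : (∑ j ∈ (KKb b B).filter (fun j => j.sum (fun p k => p.2 * k) = v),
          TT N j) ≠ 0 := by
        intro h0
        rw [h0, mul_zero] at hne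
        exact hne rfl
      obtain ⟨j, hj, -⟩ := Finset.exists_ne_zero_of_sum_ne_zero hne2
      obtain ⟨hjK, h2⟩ := Finset.mem_filter.mp hj
      obtain ⟨hK, h1⟩ := Finset.mem_filter.mp hjK
      rw [← h2]
      exact sum2_le b B hK h1
    · rintro ⟨⟨hv, _⟩, hne⟩
      exact ⟨hv, hne⟩

lemma signT (j : ℕ × ℕ →₀ ℕ) :
    (-1 : ℤ) ^ (j.sum fun p k => p.2 * k) * TT N j =
      (-1 : ℤ) ^ (j.sum fun _ k => k) * CC N j := by
  rw [TT, CC, Finsupp.sum, Finsupp.sum,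
    ← Finset.prod_pow_eq_pow_sum j.support (fun p => p.2 * j p) (-1 : ℤ),
    ← Finset.prod_pow_eq_pow_sum j.support (fun p => j p) (-1 : ℤ),
    ← Finset.prod_mul_distrib, ← Finset.prod_mul_distrib]
  refine Finset.prod_congr rfl fun p _ => ?_
  have e1 : (-(-1 : ℤ) ^ p.2) ^ (j p) = (-1 : ℤ) ^ (j p) * (-1 : ℤ) ^ (p.2 * j p) := by
    rw [neg_pow, ← pow_mul]
  have e2 : (-1 : ℤ) ^ (p.2 * j p) * (-1 : ℤ) ^ (p.2 * j p) = 1 := by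
    rw [← pow_add, ← two_mul, pow_mul, neg_one_sq, one_pow]
  rw [e1]
  calc (-1 : ℤ) ^ (p.2 * j p) *
        ((-1 : ℤ) ^ (j p) * (-1 : ℤ) ^ (p.2 * j p) * Ring.choose (-(-1 : ℤ) ^ p.2 * (N p : ℤ)) (j p))
      = ((-1 : ℤ) ^ (p.2 * j p) * (-1 : ℤ) ^ (p.2 * j p)) *
        ((-1 : ℤ) ^ (j p) * Ring.choose (-(-1 : ℤ) ^ p.2 * (N p : ℤ)) (j p)) := by ring
    _ = (-1 : ℤ) ^ (j p) * Ring.choose (-(-1 : ℤ) ^ p.2 * (N p : ℤ)) (j p) := by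
        rw [e2, one_mul]

lemma Ifin_supp {i : ℕ →₀ ℕ} (hi : i ∈ Ifin b) : i.support ⊆ Finset.Icc 1 b := by
  obtain ⟨hle, hi0, hsum⟩ := Finset.mem_filter.mp hi
  rw [Finset.mem_Iic] at hle
  intro α hα
  have h : i α ≠ 0 := Finsupp.mem_support_iff.mp hα
  have hMi : i α ≤ Mi b α := Finsupp.le_def.mp hle α
  by_contra hmem
  rw [Mi, Finsupp.indicator_apply, dif_neg hmem] at hMi
  omega

lemma Ifin_sum_eq {i : ℕ →₀ ℕ} (hi : i ∈ Ifin b) :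
    ∑ α ∈ Finset.Icc 1 b, α * i α = b := by
  obtain ⟨hle, hi0, hsum⟩ := Finset.mem_filter.mp hi
  have h := Finsupp.sum_of_support_subset i (Ifin_supp b hi) (fun α k => α * k)
    (fun α _ => Nat.mul_zero α)
  rw [← h]
  exact hsum

lemma Ifin_tot {i : ℕ →₀ ℕ} (hi : i ∈ Ifin b) :
    i.sum (fun _ k => k) = ∑ α ∈ Finset.Icc 1 b, i α :=
  Finsupp.sum_of_support_subset i (Ifin_supp b hi) _ (fun α _ => rfl)

lemma Phi_mem_Ifin (hb : 1 ≤ b) {j : ℕ × ℕ →₀ ℕ} (hj : j ∈ KKb b B) :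
    Phi b B j ∈ Ifin b := by
  obtain ⟨hK, h1⟩ := Finset.mem_filter.mp hj
  have hP := supp_sub_PPr hK
  have hsum : (Phi b B j).sum (fun α k => α * k) = b := by
    rw [Finsupp.sum_of_support_subset (Phi b B j)
      (Finsupp.support_indicator_subset _ _) _ (fun α _ => Nat.mul_zero α)]
    rw [← H1 hP]
    exact h1
  rw [Ifin, Finset.mem_filter, Finset.mem_Iic]
  refine ⟨?_, ?_, hsum⟩
  · rw [Finsupp.le_def]
    intro α
    by_cases hα : α ∈ Finset.Icc 1 b
    · have h1α : 1 ≤ α := (Finset.mem_Icc.mp hα).1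
      have h1' : ∑ α' ∈ Finset.Icc 1 b, α' * Phi b B j α' = b := by
        rw [← H1 hP]; exact h1
      have : α * Phi b B j α ≤ b :=
        le_trans (Finset.single_le_sum (f := fun α' => α' * Phi b B j α')
          (fun q _ => Nat.zero_le _) hα) (le_of_eq h1')
      have hMi : Mi b α = b := by
        rw [Mi, Finsupp.indicator_apply, dif_pos hα]
      rw [hMi]
      calc Phi b B j α ≤ α * Phi b B j α := Nat.le_mul_of_pos_left _ h1α
        _ ≤ b := this
    · rw [Phi_apply_not_mem j hα]
      exact Nat.zero_le _
  · exact Phi_apply_not_mem j (by simp)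

lemma Ifin_le {i : ℕ →₀ ℕ} (hi : i ∈ Ifin b) (α : ℕ) : i α ≤ b := by
  obtain ⟨hle, hi0, hsum⟩ := Finset.mem_filter.mp hi
  rw [Finset.mem_Iic] at hle
  have h := Finsupp.le_def.mp hle α
  by_cases hα : α ∈ Finset.Icc 1 b
  · rw [Mi, Finsupp.indicator_apply, dif_pos hα] at h
    exact h
  · rw [Mi, Finsupp.indicator_apply, dif_neg hα] at h
    omega

lemma step6c (hb : 1 ≤ b) {i : ℕ →₀ ℕ} (hi : i ∈ Ifin b) :
    ∑ j ∈ (KKb b B).filter (fun j => Phi b B j = i), CC N j =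
      ∏ α ∈ i.support, Ring.choose
        (∑ β ∈ Finset.Icc 1 B, (-(-1 : ℤ) ^ β * (N (α, β) : ℤ))) (i α) := by
  set fI : ℕ × ℕ → ℤ := fun p => -(-1 : ℤ) ^ p.2 * (N p : ℤ) with hfI
  have hrhs : ∀ α ∈ i.support,
      Ring.choose (∑ β ∈ Finset.Icc 1 B, (-(-1 : ℤ) ^ β * (N (α, β) : ℤ))) (i α) =
      ∑ k ∈ (Finset.Icc 1 B).finsuppAntidiag (i α),
        ∏ β ∈ Finset.Icc 1 B, Ring.choose (fI (α, β)) (k β) :=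
    fun α _ => ring_choose_finset_sum (Finset.Icc 1 B) (fun β => fI (α, β)) (i α)
  rw [Finset.prod_congr rfl hrhs, Finset.prod_sum]
  refine Finset.sum_bij'
    (i := fun j _ => fun α _ => Finsupp.indicator (Finset.Icc 1 B) (fun β _ => j (α, β)))
    (j := fun g _ => Finsupp.indicator (PPr b B)
      (fun p _ => if h : p.1 ∈ i.support then g p.1 h p.2 else 0)) ?_ ?_ ?_ ?_ ?_
  -- hi : forward map lands in pi set
  · intro j hj
    obtain ⟨hjK, hPhi⟩ := Finset.mem_filter.mp hj
    obtain ⟨hK, h1⟩ := Finset.mem_filter.mp hjK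
    rw [Finset.mem_pi]
    intro α hα
    rw [mem_finsuppAntidiag]
    constructor
    · have hαb : α ∈ Finset.Icc 1 b := Ifin_supp b hi hα
      rw [Finset.sum_congr rfl (fun β hβ => by
        rw [Finsupp.indicator_apply, dif_pos hβ])]
      rw [← Phi_apply_mem j hαb, hPhi]
    · intro β hβ
      exact Finset.mem_coe.mp (Finsupp.support_indicator_subset _ _ hβ)
  -- hj : backward map lands in fiber
  · intro g hg
    have hgm := Finset.mem_pi.mp hg
    set Jg : ℕ × ℕ →₀ ℕ := Finsupp.indicator (PPr b B)
      (fun p _ => if h : p.1 ∈ i.support then g p.1 h p.2 else 0) with hJg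
    have hJgApp : ∀ p (hp : p ∈ PPr b B), Jg p =
        if h : p.1 ∈ i.support then g p.1 h p.2 else 0 := by
      intro p hp
      rw [hJg, Finsupp.indicator_apply, dif_pos hp]
    have hJg0 : ∀ p, p ∉ PPr b B → Jg p = 0 := by
      intro p hp
      rw [hJg, Finsupp.indicator_apply, dif_neg hp]
    have hgsum : ∀ α (h : α ∈ i.support), ∑ β ∈ Finset.Icc 1 B, g α h β = i α :=
      fun α h => (mem_finsuppAntidiag.mp (hgm α h)).1
    have hgsupp : ∀ α (h : α ∈ i.support), (g α h).support ⊆ Finset.Icc 1 B :=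
      fun α h => (mem_finsuppAntidiag.mp (hgm α h)).2
    have hgle : ∀ α (h : α ∈ i.support) β, g α h β ≤ i α := by
      intro α h β
      by_cases hβ : β ∈ Finset.Icc 1 B
      · rw [← hgsum α h]
        exact Finset.single_le_sum (f := fun β' => g α h β') (fun q _ => Nat.zero_le _) hβ
      · rw [Finsupp.notMem_support_iff.mp (fun hmem => hβ (hgsupp α h hmem))]
        exact Nat.zero_le _
    have hKmem : Jg ∈ KK b B := by
      rw [mem_KK]
      intro p hp
      by_cases hP : p ∈ PPr b B
      · refine ⟨hP, ?_⟩
        rw [hJgApp p hP] at hp ⊢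
        split_ifs with h
        · exact le_trans (hgle p.1 h p.2) (Ifin_le b hi p.1)
        · omega
      · exact absurd (hJg0 p hP) hp
    have hP := supp_sub_PPr hKmem
    have hPhiJg : Phi b B Jg = i := by
      ext α
      by_cases hα : α ∈ Finset.Icc 1 b
      · rw [Phi_apply_mem Jg hα]
        by_cases hαi : α ∈ i.support
        · rw [Finset.sum_congr rfl (fun β hβ => by
            rw [hJgApp (α, β) (mem_PPr.mpr ⟨Finset.mem_Icc.mp hα, Finset.mem_Icc.mp hβ⟩),
              dif_pos hαi])]
          exact hgsum α hαi
        · rw [Finset.sum_congr rfl (fun β hβ => by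
            rw [hJgApp (α, β) (mem_PPr.mpr ⟨Finset.mem_Icc.mp hα, Finset.mem_Icc.mp hβ⟩),
              dif_neg hαi]), Finset.sum_const, smul_eq_mul, mul_zero]
          exact (Finsupp.notMem_support_iff.mp hαi).symm
      · rw [Phi_apply_not_mem Jg hα]
        by_cases hαi : α ∈ i.support
        · exact absurd (Ifin_supp b hi hαi) hα
        · exact (Finsupp.notMem_support_iff.mp hαi).symm
    have hsum1 : Jg.sum (fun p k => p.1 * k) = b := by
      rw [H1 hP, Finset.sum_congr rfl (fun α hα => by rw [hPhiJg])]
      exact Ifin_sum_eq b hi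
    rw [Finset.mem_filter, KKb, Finset.mem_filter]
    exact ⟨⟨hKmem, hsum1⟩, hPhiJg⟩
  -- left inverse
  · intro j hj
    obtain ⟨hjK, hPhi⟩ := Finset.mem_filter.mp hj
    obtain ⟨hK, h1⟩ := Finset.mem_filter.mp hjK
    have hP := supp_sub_PPr hK
    have hB1 : ∀ p : ℕ × ℕ, j p ≠ 0 → p.1 ∈ i.support := by
      intro p hp
      have hPp := hP p hp
      obtain ⟨⟨h11, h12⟩, h21, h22⟩ := mem_PPr.mp hPp
      rw [Finsupp.mem_support_iff, ← hPhi,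
        Phi_apply_mem j (Finset.mem_Icc.mpr ⟨h11, h12⟩)]
      intro h0
      have hle : j (p.1, p.2) ≤ ∑ β ∈ Finset.Icc 1 B, j (p.1, β) :=
        Finset.single_le_sum (f := fun β => j (p.1, β)) (fun q _ => Nat.zero_le _)
          (Finset.mem_Icc.mpr ⟨h21, h22⟩)
      rw [h0] at hle
      simp only [Prod.mk.eta] at hle
      omega
    ext p
    rw [Finsupp.indicator_apply]
    split_ifs with hPp hsi
    · dsimp only
      rw [Finsupp.indicator_apply, dif_pos (Finset.mem_Icc.mpr (mem_PPr.mp hPp).2)]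
      try exact congrArg j Prod.mk.eta
    · symm
      by_contra h0
      exact hsi (hB1 p h0)
    · symm
      by_contra h0
      exact hPp (hP p h0)
  -- right inverse
  · intro g hg
    have hgm := Finset.mem_pi.mp hg
    funext α hα
    ext β
    rw [Finsupp.indicator_apply]
    split_ifs with hβ
    · rw [Finsupp.indicator_apply, dif_pos (by
        exact Finset.mem_product.mpr ⟨Ifin_supp b hi hα, hβ⟩), dif_pos hα]
    · exact (Finsupp.notMem_support_iff.mp
        (fun hmem => hβ ((mem_finsuppAntidiag.mp (hgm α hα)).2 hmem))).symm
  -- term equality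
  · intro j hj
    obtain ⟨hjK, hPhi⟩ := Finset.mem_filter.mp hj
    obtain ⟨hK, h1⟩ := Finset.mem_filter.mp hjK
    have hP := supp_sub_PPr hK
    have hB1 : ∀ p : ℕ × ℕ, j p ≠ 0 → p.1 ∈ i.support := by
      intro p hp
      have hPp := hP p hp
      obtain ⟨⟨h11, h12⟩, h21, h22⟩ := mem_PPr.mp hPp
      rw [Finsupp.mem_support_iff, ← hPhi,
        Phi_apply_mem j (Finset.mem_Icc.mpr ⟨h11, h12⟩)]
      intro h0
      have hle : j (p.1, p.2) ≤ ∑ β ∈ Finset.Icc 1 B, j (p.1, β) :=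
        Finset.single_le_sum (f := fun β => j (p.1, β)) (fun q _ => Nat.zero_le _)
          (Finset.mem_Icc.mpr ⟨h21, h22⟩)
      rw [h0] at hle
      simp only [Prod.mk.eta] at hle
      omega
    have hattach : ∀ (x : {y // y ∈ i.support}),
        (∏ β ∈ Finset.Icc 1 B, Ring.choose (fI (x.1, β))
          ((Finsupp.indicator (Finset.Icc 1 B) (fun β _ => j (x.1, β))) β)) =
        ∏ β ∈ Finset.Icc 1 B, Ring.choose (fI (x.1, β)) (j (x.1, β)) := by
      intro x
      refine Finset.prod_congr rfl fun β hβ => ?_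
      rw [Finsupp.indicator_apply, dif_pos hβ]
    rw [Finset.prod_congr rfl (fun x _ => hattach x)]
    rw [Finset.prod_attach i.support
      (fun α => ∏ β ∈ Finset.Icc 1 B, Ring.choose (fI (α, β)) (j (α, β)))]
    rw [← Finset.prod_product
      (s := i.support) (t := Finset.Icc 1 B) (f := fun p => Ring.choose (fI p) (j p))]
    rw [CC]
    refine Finset.prod_subset ?_ ?_
    · intro p hp
      have hjp : j p ≠ 0 := Finsupp.mem_support_iff.mp hp
      exact Finset.mem_product.mpr
        ⟨hB1 p hjp, Finset.mem_Icc.mpr (mem_PPr.mp (hP p hjp)).2⟩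
    · intro p _ hp
      rw [Finsupp.notMem_support_iff.mp hp, Ring.choose_zero_right]

lemma step6 (hb : 1 ≤ b) {i : ℕ →₀ ℕ} (hi : i ∈ Ifin b) :
    ∑ j ∈ (KKb b B).filter (fun j => Phi b B j = i),
      ((-1 : ℤ) ^ (j.sum fun _ k => k) * CC N j) =
    ∏ α ∈ i.support, ((-1 : ℤ) ^ (i α) * Ring.choose
      (∑ β ∈ Finset.Icc 1 B, (-(-1 : ℤ) ^ β * (N (α, β) : ℤ))) (i α)) := by
  have htot : ∀ j ∈ (KKb b B).filter (fun j => Phi b B j = i),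
      j.sum (fun _ k => k) = i.sum (fun _ k => k) := by
    intro j hj
    obtain ⟨hjK, hPhi⟩ := Finset.mem_filter.mp hj
    obtain ⟨hK, h1⟩ := Finset.mem_filter.mp hjK
    rw [H0 (supp_sub_PPr hK), Finset.sum_congr rfl (fun α _ => by rw [hPhi]),
      ← Ifin_tot b hi]
  rw [Finset.sum_congr rfl (fun j hj => by rw [htot j hj]), ← Finset.mul_sum,
    step6c N b B hb hi, Finset.prod_mul_distrib, Finset.prod_pow_eq_pow_sum]
  congr 1

lemma chi (hB : ∀ p ∈ N.support, p.2 ≤ B) (α : ℕ) :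
    -(∑ᶠ β ∈ Set.Ici 1, (-1 : ℤ) ^ β * (N (α, β) : ℤ)) =
      ∑ β ∈ Finset.Icc 1 B, (-(-1 : ℤ) ^ β * (N (α, β) : ℤ)) := by
  rw [finsum_mem_eq_sum_of_inter_support_eq (fun β => (-1 : ℤ) ^ β * (N (α, β) : ℤ))
    (t := Finset.Icc 1 B) ?_]
  · rw [← Finset.sum_neg_distrib]
    exact Finset.sum_congr rfl fun β _ => by ring
  · ext β
    simp only [Set.mem_inter_iff, Set.mem_Ici, Function.mem_support, Finset.coe_Icc,
      Set.mem_Icc]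
    constructor
    · rintro ⟨hβ, hne⟩
      refine ⟨⟨hβ, ?_⟩, hne⟩
      have hN : N (α, β) ≠ 0 := by
        intro h0
        rw [h0] at hne
        simp at hne
      exact hB (α, β) (Finsupp.mem_support_iff.mpr hN)
    · rintro ⟨⟨hβ, _⟩, hne⟩
      exact ⟨hβ, hne⟩

lemma step5 (hb : 1 ≤ b) :
    ∑ j ∈ KKb b B, ((-1 : ℤ) ^ (j.sum fun _ k => k) * CC N j) =
    ∑ i ∈ Ifin b, ∑ j ∈ (KKb b B).filter (fun j => Phi b B j = i),
      ((-1 : ℤ) ^ (j.sum fun _ k => k) * CC N j) :=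
  (Finset.sum_fiberwise_of_maps_to (fun j hj => Phi_mem_Ifin b B hb hj) _).symm

lemma setI_eq :
    {i : ℕ →₀ ℕ | i 0 = 0 ∧ i.sum (fun α k => α * k) = b} = ↑(Ifin b) := by
  ext i
  simp only [Set.mem_setOf_eq, Finset.coe_filter, Ifin, Finset.mem_Iic]
  constructor
  · rintro ⟨h0, hsum⟩
    refine ⟨?_, h0, hsum⟩
    rw [Finsupp.le_def]
    intro α
    have hle : ∀ γ : ℕ, i γ ≠ 0 → γ * i γ ≤ b := by
      intro γ hγ
      rw [← hsum]
      exact Finset.single_le_sum (f := fun q => q * i q) (fun q _ => Nat.zero_le _)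
        (Finsupp.mem_support_iff.mpr hγ)
    rw [Mi, Finsupp.indicator_apply]
    split_ifs with hα
    · by_cases hi0 : i α = 0
      · omega
      · have h1α : 1 ≤ α := (Finset.mem_Icc.mp hα).1
        have := hle α hi0
        calc i α ≤ α * i α := Nat.le_mul_of_pos_left _ h1α
          _ ≤ b := this
    · rw [Finset.mem_Icc, not_and_or] at hα
      by_cases hi0 : i α = 0
      · omega
      · rcases hα with h | h
        · have hα0 : α = 0 := by omega
          subst hα0
          omega
        · have := hle α hi0
          have h1 : 1 ≤ i α := Nat.one_le_iff_ne_zero.mpr hi0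
          push_neg at h
          nlinarith
  · rintro ⟨hle, h0, hsum⟩
    exact ⟨h0, hsum⟩

lemma stepR (G : (ℕ →₀ ℕ) → ℤ) :
    (∑ᶠ i : {i : ℕ →₀ ℕ // (i : ℕ →₀ ℕ) 0 = 0 ∧
        (i : ℕ →₀ ℕ).sum (fun α k => α * k) = b}, G ↑i) = ∑ i ∈ Ifin b, G i := by
  rw [finsum_subtype_eq_finsum_cond]
  exact finsum_mem_eq_sum_of_inter_support_eq G
    (congrArg (· ∩ Function.support G) (setI_eq b))

end Main

/-- Let `(ñ_α^β)_{α,β ≥ 1}` be natural numbers, finitely supported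
(encoded by a finsupp `N` on `ℕ × ℕ` vanishing when a coordinate is `0`).  For `b, v ≥ 1`,
`n_b^v` is the (finite) sum over finitely supported families `(j_α^β)_{α,β ≥ 1}` with
`∑ α·j_α^β = b` and `∑ β·j_α^β = v` of `∏ (-(-1)^β)^(j_α^β) · binom (-(-1)^β·ñ_α^β) (j_α^β)`,
and `χ̃_α := ∑_{β ≥ 1} (-1)^β·ñ_α^β`.  Then for every `b ≥ 1`,
`∑_{v ≥ 1} (-1)^v·n_b^v = ∑_{(i_α), ∑ α·i_α = b} ∏_α (-1)^(i_α)·binom (-χ̃_α) (i_α)`. -/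
theorem stmt_1 (N : ℕ × ℕ →₀ ℕ) (hN1 : ∀ β, N (0, β) = 0) (hN2 : ∀ α, N (α, 0) = 0)
    (b : ℕ) (hb : 1 ≤ b) :
    (∑ᶠ v ∈ Set.Ici 1, ((-1 : ℤ) ^ v *
      ∑ᶠ j : {j : ℕ × ℕ →₀ ℕ // (∀ β, j (0, β) = 0) ∧ (∀ α, j (α, 0) = 0) ∧
          (j : ℕ × ℕ →₀ ℕ).sum (fun p k => p.1 * k) = b ∧
          (j : ℕ × ℕ →₀ ℕ).sum (fun p k => p.2 * k) = v},
        ∏ p ∈ (j : ℕ × ℕ →₀ ℕ).support,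
          ((-(-1 : ℤ) ^ p.2) ^ ((j : ℕ × ℕ →₀ ℕ) p) *
            Ring.choose (-(-1 : ℤ) ^ p.2 * (N p : ℤ)) ((j : ℕ × ℕ →₀ ℕ) p)))) =
    ∑ᶠ i : {i : ℕ →₀ ℕ // (i : ℕ →₀ ℕ) 0 = 0 ∧
        (i : ℕ →₀ ℕ).sum (fun α k => α * k) = b},
      ∏ α ∈ (i : ℕ →₀ ℕ).support,
        ((-1 : ℤ) ^ ((i : ℕ →₀ ℕ) α) *
          Ring.choose (-(∑ᶠ β ∈ Set.Ici 1, (-1 : ℤ) ^ β * (N (α, β) : ℤ)))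
            ((i : ℕ →₀ ℕ) α)) := by
  set B := N.support.sup Prod.snd with hBdef
  have hB : ∀ p ∈ N.support, p.2 ≤ B := fun p hp => Finset.le_sup (f := Prod.snd) hp
  have main : (∑ᶠ v ∈ Set.Ici 1, ((-1 : ℤ) ^ v *
      ∑ᶠ j : {j : ℕ × ℕ →₀ ℕ // (∀ β, j (0, β) = 0) ∧ (∀ α, j (α, 0) = 0) ∧
          (j : ℕ × ℕ →₀ ℕ).sum (fun p k => p.1 * k) = b ∧
          (j : ℕ × ℕ →₀ ℕ).sum (fun p k => p.2 * k) = v}, TT N ↑j)) =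
      ∑ᶠ i : {i : ℕ →₀ ℕ // (i : ℕ →₀ ℕ) 0 = 0 ∧
        (i : ℕ →₀ ℕ).sum (fun α k => α * k) = b},
      ∏ α ∈ (i : ℕ →₀ ℕ).support,
        ((-1 : ℤ) ^ ((i : ℕ →₀ ℕ) α) *
          Ring.choose (-(∑ᶠ β ∈ Set.Ici 1, (-1 : ℤ) ^ β * (N (α, β) : ℤ)))
            ((i : ℕ →₀ ℕ) α)) := by
    calc (∑ᶠ v ∈ Set.Ici 1, ((-1 : ℤ) ^ v *
        ∑ᶠ j : {j : ℕ × ℕ →₀ ℕ // (∀ β, j (0, β) = 0) ∧ (∀ α, j (α, 0) = 0) ∧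
            (j : ℕ × ℕ →₀ ℕ).sum (fun p k => p.1 * k) = b ∧
            (j : ℕ × ℕ →₀ ℕ).sum (fun p k => p.2 * k) = v}, TT N ↑j))
        = ∑ j ∈ KKb b B, (-1 : ℤ) ^ (j.sum fun p k => p.2 * k) * TT N j :=
          stepL N b B hb hB
      _ = ∑ j ∈ KKb b B, ((-1 : ℤ) ^ (j.sum fun _ k => k) * CC N j) :=
          Finset.sum_congr rfl fun j _ => signT N j
      _ = ∑ i ∈ Ifin b, ∑ j ∈ (KKb b B).filter (fun j => Phi b B j = i),
            ((-1 : ℤ) ^ (j.sum fun _ k => k) * CC N j) := step5 N b B hb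
      _ = ∑ i ∈ Ifin b, ∏ α ∈ i.support, ((-1 : ℤ) ^ (i α) * Ring.choose
            (∑ β ∈ Finset.Icc 1 B, (-(-1 : ℤ) ^ β * (N (α, β) : ℤ))) (i α)) :=
          Finset.sum_congr rfl fun i hi => step6 N b B hb hi
      _ = ∑ i ∈ Ifin b, ∏ α ∈ i.support, ((-1 : ℤ) ^ (i α) * Ring.choose
            (-(∑ᶠ β ∈ Set.Ici 1, (-1 : ℤ) ^ β * (N (α, β) : ℤ))) (i α)) :=
          Finset.sum_congr rfl fun i _ => Finset.prod_congr rfl fun α _ => by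
            rw [chi N B hB α]
      _ = _ := (stepR b _).symm
  exact main
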